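/- (Correctness of Cascade Sampling over a stream) Let p_1, p_2, …, p_n be distinct elements with strictly positive weights, and let k ≤ n. Suppose (Y_1,…,Y_k) is distributed as a k-sample without replacement from S_m = {p_1,…,p_m} for some m with k ≤ m < n, and let (Y'_1,…,Y'_k) be obtained from (Y_1,…,Y_k) by the cascade update with the new element a = p_{m+1} (i.e., the construction of the Cascade Lemma applied with S = S_m, T = S_m ∪ {p_{m+1}}). Then (Y'_1,…,Y'_k) is a k-sample without replacement from S_{m+1} = {p_1,…,p_{m+1}}; consequently, by induction starting from any k-sample without replacement from {p_1,…,p_k}, the output of Cascade Sampling after processing all of p_1,…,p_n is a k-sample without replacement from {p_1,…,p_n}. -/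

import Mathlib

open MeasureTheory Finset


private def fb (k i : ℕ) : Finset (Fin k) := Finset.univ.filter fun l => l.val < i

private lemma mem_fb {k i : ℕ} {l : Fin k} : l ∈ fb k i ↔ l.val < i := by
  simp [fb]

private lemma fb_zero (k : ℕ) : fb k 0 = ∅ := by ext l; simp [mem_fb]

private lemma fb_top (k : ℕ) : fb k k = Finset.univ := by ext l; simp [mem_fb, l.isLt]

private lemma fb_fin {k : ℕ} (i : Fin k) :
    (Finset.univ.filter (· < i)) = fb k i.val := by
  apply Finset.filter_congr; intro l _; exact Fin.lt_def ..

private lemma fb_le {k : ℕ} (i : ℕ) :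
    (Finset.univ.filter fun l : Fin k => l.val ≤ i) = fb k (i + 1) := by
  apply Finset.filter_congr; intro l _; simp [Nat.lt_succ_iff]

private lemma fb_succ {k i : ℕ} (h : i < k) :
    fb k (i + 1) = insert ⟨i, h⟩ (fb k i) := by
  ext l
  simp only [mem_fb, Finset.mem_insert, Nat.lt_succ_iff_lt_or_eq]
  constructor
  · rintro (h1 | h1)
    · exact Or.inr h1
    · exact Or.inl (Fin.ext h1)
  · rintro (rfl | h1)
    · exact Or.inr rfl
    · exact Or.inl h1

private lemma self_not_mem_fb {k i : ℕ} (h : i < k) : (⟨i, h⟩ : Fin k) ∉ fb k i := by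
  simp [mem_fb]

private lemma fb_card {k i : ℕ} (h : i ≤ k) : (fb k i).card = i := by
  have : fb k i = (Finset.range i).attachFin
      (fun m hm => lt_of_lt_of_le (Finset.mem_range.mp hm) h) := by
    ext l; simp [mem_fb, Finset.mem_attachFin]
  rw [this, Finset.card_attachFin, Finset.card_range]

private lemma fb_compl_insert {k i : ℕ} (h : i < k) :
    Finset.univ \ fb k i = insert ⟨i, h⟩ (Finset.univ \ fb k (i + 1)) := by
  ext l
  simp only [Finset.mem_sdiff, Finset.mem_univ, true_and, mem_fb, Finset.mem_insert,
    Nat.lt_succ_iff_lt_or_eq, not_or]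
  constructor
  · intro hl
    rcases Nat.eq_or_lt_of_le (Nat.le_of_not_lt hl) with h1 | h1
    · exact Or.inl (Fin.ext h1.symm)
    · exact Or.inr ⟨by omega, by omega⟩
  · rintro (rfl | ⟨h1, h2⟩)
    · simp
    · exact h1

private def zchain {α : Type*} [DecidableEq α] (k : ℕ) (a : α) (y x : Fin k → α) : ℕ → α
  | 0 => a
  | i + 1 =>
    if h : i < k then
      (if y ⟨i, h⟩ = zchain k a y x i then x ⟨i, h⟩ else zchain k a y x i)
    else zchain k a y x i

private lemma zchain_congr {α : Type*} [DecidableEq α] {k : ℕ} (a : α) (y : Fin k → α)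
    {x x' : Fin k → α} : ∀ i : ℕ, (∀ l : Fin k, l.val < i → x l = x' l) →
    zchain k a y x i = zchain k a y x' i
  | 0, _ => rfl
  | i + 1, h => by
    have ih := zchain_congr a y i (fun l hl => h l (Nat.lt_succ_of_lt hl))
    unfold zchain
    rw [ih]
    split
    · next hik =>
      rw [h ⟨i, hik⟩ (Nat.lt_succ_self i)]
    · rfl

private lemma zchain_mem {α : Type*} [DecidableEq α] {k : ℕ} (a : α) (y x : Fin k → α) :
    ∀ i : ℕ, i ≤ k → zchain k a y x i ∈ insert a ((fb k i).image x)
  | 0, _ => by simp [zchain]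
  | i + 1, h => by
    have hik : i < k := h
    have ih := zchain_mem a y x i (Nat.le_of_lt hik)
    have hsub : insert a ((fb k i).image x) ⊆ insert a ((fb k (i + 1)).image x) := by
      apply Finset.insert_subset_insert
      apply Finset.image_subset_image
      intro l hl
      rw [mem_fb] at hl ⊢; omega
    unfold zchain
    rw [dif_pos hik]
    split
    · apply Finset.mem_insert_of_mem
      apply Finset.mem_image_of_mem
      rw [mem_fb]
      exact Nat.lt_succ_self i
    · exact hsub ih

section
variable {α : Type*} [DecidableEq α]

private lemma inv_lemma (k : ℕ) (a : α) (S : Finset α) (ha : a ∉ S) (y x : Fin k → α) :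
    ∀ i : ℕ, i ≤ k →
    (∀ l : Fin k, l.val < i → x l ∈ S) →
    (∀ l l' : Fin k, l.val < i → l'.val < i → x l = x l' → l = l') →
    (∀ l : Fin k, l.val < i → y l = zchain k a y x l.val ∨ y l = x l) →
    insert a ((fb k i).image x) = insert (zchain k a y x i) ((fb k i).image y) ∧
      zchain k a y x i ∉ (fb k i).image y
  | 0, _, _, _, _ => by simp [zchain, fb]
  | i + 1, h, hxS, hxinj, hcomp => by
    have hik : i < k := h
    set li : Fin k := ⟨i, hik⟩ with hli
    obtain ⟨ih1, ih2⟩ := inv_lemma k a S ha y x i (Nat.le_of_lt hik)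
      (fun l hl => hxS l (Nat.lt_succ_of_lt hl))
      (fun l l' hl hl' => hxinj l l' (Nat.lt_succ_of_lt hl) (Nat.lt_succ_of_lt hl'))
      (fun l hl => hcomp l (Nat.lt_succ_of_lt hl))
    set z := zchain k a y x i with hz
    have hzmem : z ∈ insert a ((fb k i).image x) := by
      rw [ih1]; exact Finset.mem_insert_self _ _
    have hxli : x li ∉ insert a ((fb k i).image x) := by
      simp only [Finset.mem_insert, Finset.mem_image, not_or]
      constructor
      · intro hxa; exact ha (hxa ▸ hxS li (Nat.lt_succ_self i))
      · rintro ⟨l, hl, hxl⟩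
        rw [mem_fb] at hl
        have := hxinj l li (Nat.lt_succ_of_lt hl) (Nat.lt_succ_self i) hxl
        rw [this] at hl; simp [hli] at hl
    have hxz : x li ≠ z := fun hEq => hxli (hEq ▸ hzmem)
    have himg : (fb k (i+1)).image x = insert (x li) ((fb k i).image x) := by
      rw [fb_succ hik, Finset.image_insert]
    have himgy : (fb k (i+1)).image y = insert (y li) ((fb k i).image y) := by
      rw [fb_succ hik, Finset.image_insert]
    have hznext : zchain k a y x (i+1) = if y li = z then x li else z := by
      rw [zchain, dif_pos hik]
    have hyiYi : (fb k i).image y ⊆ insert a ((fb k i).image x) := by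
      rw [ih1]; exact Finset.subset_insert _ _
    by_cases hy : y li = z
    · rw [hznext, if_pos hy, himg, himgy]
      constructor
      · rw [Finset.insert_comm, ih1, hy, Finset.insert_comm]
      · simp only [Finset.mem_insert, not_or]
        exact ⟨fun hEq => hxz (hEq.trans hy), fun hmem => hxli (hyiYi hmem)⟩
    · have hy' : y li = x li := by
        rcases hcomp li (Nat.lt_succ_self i) with h1 | h1
        · exact absurd h1 hy
        · exact h1
      rw [hznext, if_neg hy, himg, himgy]
      constructor
      · rw [Finset.insert_comm, ih1, Finset.insert_comm, hy']
      · simp only [Finset.mem_insert, not_or]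
        exact ⟨fun hEq => hy (hEq.symm), ih2⟩

end
section
variable {α : Type*} [DecidableEq α]

private def Wden (k : ℕ) (a : α) (w : α → ℝ) (S : Finset α) (y : Fin k → α) (i : ℕ) : ℝ :=
  (∑ c ∈ insert a S, w c) - ∑ l ∈ fb k i, w (y l)

private noncomputable def qfac (k : ℕ) (a : α) (w : α → ℝ) (S : Finset α) (y x : Fin k → α)
    (j : Fin k) : ℝ :=
  if y j = zchain k a y x j.val then w (zchain k a y x j.val) / Wden k a w S y j.val
  else if y j = x j then max (1 - w (zchain k a y x j.val) / Wden k a w S y j.val) 0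
  else 0

private lemma qfac_nonneg (k : ℕ) (a : α) (w : α → ℝ) (S : Finset α)
    (hw : ∀ c ∈ insert a S, 0 < w c) (y x : Fin k → α)
    (hyT : ∀ j, y j ∈ insert a S) (hyinj : Function.Injective y)
    (hxS : ∀ j, x j ∈ S) (j : Fin k) : 0 ≤ qfac k a w S y x j := by
  have hzT : zchain k a y x j.val ∈ insert a S := by
    have := zchain_mem a y x j.val (le_of_lt j.isLt)
    rcases Finset.mem_insert.mp this with h | h
    · rw [h]; exact Finset.mem_insert_self _ _
    · rcases Finset.mem_image.mp h with ⟨l, _, hl⟩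
      exact Finset.mem_insert_of_mem (hl ▸ hxS l)
  have hWnn : 0 ≤ Wden k a w S y j.val := by
    have hsub : (fb k j.val).image y ⊆ insert a S := by
      intro c hc; rcases Finset.mem_image.mp hc with ⟨l, _, hl⟩; exact hl ▸ hyT l
    have h1 : ∑ l ∈ fb k j.val, w (y l) = ∑ c ∈ (fb k j.val).image y, w c := by
      rw [Finset.sum_image]
      intro l _ l' _ hll'; exact hyinj hll'
    have h2 : ∑ c ∈ (fb k j.val).image y, w c ≤ ∑ c ∈ insert a S, w c :=
      Finset.sum_le_sum_of_subset_of_nonneg hsub (fun c hc _ => le_of_lt (hw c hc))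
    unfold Wden; rw [h1]; linarith
  unfold qfac
  split
  · exact div_nonneg (le_of_lt (hw _ hzT)) hWnn
  · split
    · exact le_max_right _ _
    · exact le_refl 0
end
section
variable {α : Type*} [DecidableEq α]

private lemma qfac_congr (k : ℕ) (a : α) (w : α → ℝ) (S : Finset α) (y : Fin k → α)
    {x x' : Fin k → α} (j : Fin k) (h : ∀ l : Fin k, l.val ≤ j.val → x l = x' l) :
    qfac k a w S y x j = qfac k a w S y x' j := by
  have hz : zchain k a y x j.val = zchain k a y x' j.val :=
    zchain_congr a y j.val (fun l hl => h l (le_of_lt hl))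
  unfold qfac
  rw [hz, h j le_rfl]

private noncomputable def XSet (k : ℕ) (S : Finset α) : Finset (Fin k → α) := by
  classical
  exact (Fintype.piFinset fun _ : Fin k => S).filter fun x => Function.Injective x

private lemma mem_XSet {k : ℕ} {S : Finset α} {x : Fin k → α} :
    x ∈ XSet k S ↔ (∀ j, x j ∈ S) ∧ Function.Injective x := by
  classical
  simp [XSet, Fintype.mem_piFinset]

end
section
variable {α : Type*} [DecidableEq α]

private lemma alg (k : ℕ) (S : Finset α) (a : α) (ha : a ∉ S) (w : α → ℝ)
    (hw : ∀ c ∈ insert a S, 0 < w c) (hk : k ≤ S.card)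
    (y : Fin k → α) (hyT : ∀ j, y j ∈ insert a S) (hyinj : Function.Injective y) :
    ∀ d i : ℕ, i + d = k → ∀ u : Fin k → α,
    (∀ l : Fin k, l.val < i → u l ∈ S) →
    (∀ l l' : Fin k, l.val < i → l'.val < i → u l = u l' → l = l') →
    (∀ l : Fin k, l.val < i → y l = zchain k a y u l.val ∨ y l = u l) →
    ∑ x ∈ (XSet k S).filter (fun x => ∀ l : Fin k, l.val < i → x l = u l),
      ((∏ j : Fin k, w (x j) / ((∑ c ∈ S, w c) - ∑ l ∈ fb k j.val, w (x l))) *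
        ∏ j : Fin k, qfac k a w S y x j)
    = (∏ j ∈ fb k i, (w (u j) / ((∑ c ∈ S, w c) - ∑ l ∈ fb k j.val, w (u l))) *
         qfac k a w S y u j)
      * ∏ j ∈ Finset.univ \ fb k i, w (y j) / Wden k a w S y j.val := by
  intro d
  induction d with
  | zero =>
    intro i hi u huS huinj hucomp
    obtain rfl : i = k := by omega
    have huX : u ∈ XSet i S :=
      mem_XSet.mpr ⟨fun j => huS j j.isLt,
        fun l l' h => huinj l l' l.isLt l'.isLt h⟩
    have hfilter : (XSet i S).filter (fun x => ∀ l : Fin i, l.val < i → x l = u l) = {u} := by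
      ext x
      simp only [Finset.mem_filter, Finset.mem_singleton]
      constructor
      · rintro ⟨_, hxu⟩
        exact funext (fun l => hxu l l.isLt)
      · rintro rfl
        exact ⟨huX, fun _ _ => rfl⟩
    rw [hfilter, Finset.sum_singleton, fb_top, Finset.sdiff_self,
      Finset.prod_empty, mul_one, Finset.prod_mul_distrib]
  | succ d ih =>
    intro i hi u huS huinj hucomp
    have hik : i < k := by omega
    set li : Fin k := ⟨i, hik⟩ with hli
    have hlival : li.val = i := rfl
    set wS : ℝ := ∑ c ∈ S, w c with hwS
    set σ : ℝ := ∑ l ∈ fb k i, w (u l) with hσ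
    obtain ⟨hinv1, hinv2⟩ := inv_lemma k a S ha y u i (le_of_lt hik) huS huinj hucomp
    have hsplit : ∀ l : Fin k, l.val < i + 1 → l.val < i ∨ l = li := fun l hl => by
      rcases Nat.lt_succ_iff_lt_or_eq.mp hl with h | h
      · exact Or.inl h
      · exact Or.inr (Fin.ext h)
    have hne : ∀ l : Fin k, l.val < i → l ≠ li := fun l hl h => by
      rw [h] at hl; exact absurd hl (by simp [hlival])
    have himgS : (fb k i).image u ⊆ S := by
      intro c hc; rcases Finset.mem_image.mp hc with ⟨l, hl, hcl⟩
      exact hcl ▸ huS l (mem_fb.mp hl)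
    have hzT : zchain k a y u i ∈ insert a S := by
      rcases Finset.mem_insert.mp (zchain_mem a y u i (le_of_lt hik)) with h | h
      · rw [h]; exact Finset.mem_insert_self _ _
      · exact Finset.mem_insert_of_mem (himgS h)
    have hsum_img : ∑ c ∈ (fb k i).image u, w c = σ :=
      Finset.sum_image (fun l hl l' hl' h => huinj l l' (mem_fb.mp hl) (mem_fb.mp hl') h)
    have hsum_imgy : ∑ c ∈ (fb k i).image y, w c = ∑ l ∈ fb k i, w (y l) :=
      Finset.sum_image (fun l _ l' _ h => hyinj h)
    have hdiff_sum : ∑ c ∈ S \ (fb k i).image u, w c = wS - σ := by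
      rw [Finset.sum_sdiff_eq_sub himgS, hsum_img]
    have hdiff_ne : (S \ (fb k i).image u).Nonempty := by
      rw [← Finset.card_pos, Finset.card_sdiff_of_subset himgS]
      have : ((fb k i).image u).card = i := by
        rw [Finset.card_image_of_injOn
          (fun l hl l' hl' h => huinj l l' (mem_fb.mp hl) (mem_fb.mp hl') h),
          fb_card (le_of_lt hik)]
      omega
    have hSdiff_pos : 0 < wS - σ := by
      rw [← hdiff_sum]
      exact Finset.sum_pos
        (fun c hc => hw c (Finset.mem_insert_of_mem (Finset.mem_sdiff.mp hc).1)) hdiff_ne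
    have hweight : wS - σ = Wden k a w S y i - w (zchain k a y u i) := by
      have h1 : ∑ c ∈ insert a ((fb k i).image u), w c = w a + σ := by
        rw [Finset.sum_insert (fun h => ha (himgS h)), hsum_img]
      have h2 : ∑ c ∈ insert (zchain k a y u i) ((fb k i).image y), w c
          = w (zchain k a y u i) + ∑ l ∈ fb k i, w (y l) := by
        rw [Finset.sum_insert hinv2, hsum_imgy]
      have h3 : ∑ c ∈ insert a S, w c = w a + wS := Finset.sum_insert ha
      have h4 := hinv1 ▸ h1
      unfold Wden
      rw [h3]
      rw [h2] at h4
      linarith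
    have hWipos : 0 < Wden k a w S y i := by
      have := hw _ hzT; linarith
    -- the IH workhorse
    have hIH : ∀ v ∈ S \ (fb k i).image u, (y li = zchain k a y u i ∨ y li = v) →
        ∑ x ∈ (XSet k S).filter
            (fun x => ∀ l : Fin k, l.val < i + 1 → x l = Function.update u li v l),
          ((∏ j : Fin k, w (x j) / (wS - ∑ l ∈ fb k j.val, w (x l))) *
            ∏ j : Fin k, qfac k a w S y x j)
        = ((w v / (wS - σ)) * qfac k a w S y (Function.update u li v) li) *
            ((∏ j ∈ fb k i, (w (u j) / (wS - ∑ l ∈ fb k j.val, w (u l))) *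
               qfac k a w S y u j) *
             ∏ j ∈ Finset.univ \ fb k (i + 1), w (y j) / Wden k a w S y j.val) := by
      intro v hv hcompli
      obtain ⟨hvS, hvimg⟩ := Finset.mem_sdiff.mp hv
      set u' := Function.update u li v with hu'
      have hu'pre : ∀ l : Fin k, l.val < i → u' l = u l := fun l hl => by
        rw [hu', Function.update_of_ne (hne l hl)]
      have hu'li : u' li = v := by rw [hu', Function.update_self]
      have hzc' : ∀ j : ℕ, j ≤ i → zchain k a y u' j = zchain k a y u j := fun j hj =>
        zchain_congr a y j (fun l hl => hu'pre l (by omega))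
      have huS' : ∀ l : Fin k, l.val < i + 1 → u' l ∈ S := fun l hl => by
        rcases hsplit l hl with h | rfl
        · rw [hu'pre l h]; exact huS l h
        · rw [hu'li]; exact hvS
      have huinj' : ∀ l l' : Fin k, l.val < i + 1 → l'.val < i + 1 → u' l = u' l' → l = l' := by
        intro l l' hl hl' hEq
        rcases hsplit l hl with h1 | rfl <;> rcases hsplit l' hl' with h2 | rfl
        · exact huinj l l' h1 h2 (by rwa [hu'pre l h1, hu'pre l' h2] at hEq)
        · exfalso; rw [hu'pre l h1, hu'li] at hEq
          exact hvimg (Finset.mem_image.mpr ⟨l, mem_fb.mpr h1, hEq⟩)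
        · exfalso; rw [hu'pre l' h2, hu'li] at hEq
          exact hvimg (Finset.mem_image.mpr ⟨l', mem_fb.mpr h2, hEq.symm⟩)
        · rfl
      have hucomp' : ∀ l : Fin k, l.val < i + 1 →
          y l = zchain k a y u' l.val ∨ y l = u' l := by
        intro l hl
        rcases hsplit l hl with h | rfl
        · rcases hucomp l h with h1 | h1
          · exact Or.inl (by rw [hzc' l.val (by omega)]; exact h1)
          · exact Or.inr (by rw [hu'pre l h]; exact h1)
        · rcases hcompli with h1 | h1
          · exact Or.inl (by rw [hlival, hzc' i le_rfl]; exact h1)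
          · exact Or.inr (by rw [hu'li]; exact h1)
      have := ih (i + 1) (by omega) u' huS' huinj' hucomp'
      rw [hwS] at this ⊢
      rw [this]
      -- now massage the RHS
      rw [fb_succ hik, Finset.prod_insert (self_not_mem_fb hik)]
      have hcongr : ∏ j ∈ fb k i,
          (w (u' j) / ((∑ c ∈ S, w c) - ∑ l ∈ fb k j.val, w (u' l))) * qfac k a w S y u' j
          = ∏ j ∈ fb k i,
          (w (u j) / ((∑ c ∈ S, w c) - ∑ l ∈ fb k j.val, w (u l))) * qfac k a w S y u j := by
        apply Finset.prod_congr rfl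
        intro j hj
        have hji : j.val < i := mem_fb.mp hj
        have h1 : w (u' j) = w (u j) := by rw [hu'pre j hji]
        have h2 : ∑ l ∈ fb k j.val, w (u' l) = ∑ l ∈ fb k j.val, w (u l) :=
          Finset.sum_congr rfl (fun l hl => by rw [hu'pre l (by have := mem_fb.mp hl; omega)])
        have h3 : qfac k a w S y u' j = qfac k a w S y u j :=
          qfac_congr k a w S y j (fun l hl => hu'pre l (by omega))
        rw [h1, h2, h3]
      have hsum' : ∑ l ∈ fb k li.val, w (u' l) = σ := by
        rw [hlival, hσ]
        exact Finset.sum_congr rfl (fun l hl => by rw [hu'pre l (mem_fb.mp hl)])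
      rw [hcongr, hu'li, hsum']
      ring
    have hpart : (XSet k S).filter (fun x => ∀ l : Fin k, l.val < i → x l = u l)
        = (S \ (fb k i).image u).biUnion (fun v => (XSet k S).filter
            (fun x => ∀ l : Fin k, l.val < i + 1 → x l = Function.update u li v l)) := by
      ext x
      simp only [Finset.mem_biUnion, Finset.mem_filter]
      constructor
      · rintro ⟨hxX, hxu⟩
        refine ⟨x li, ?_, hxX, ?_⟩
        · rw [Finset.mem_sdiff]
          obtain ⟨hxS, hxinj⟩ := mem_XSet.mp hxX
          refine ⟨hxS li, fun hmem => ?_⟩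
          rcases Finset.mem_image.mp hmem with ⟨l, hl, hEq⟩
          have hl' : l.val < i := mem_fb.mp hl
          rw [← hxu l hl'] at hEq
          have := hxinj hEq
          rw [this] at hl'
          exact absurd hl' (by simp [hlival])
        · intro l hl
          rcases hsplit l hl with h | rfl
          · rw [Function.update_of_ne (hne l h), hxu l h]
          · rw [Function.update_self]
      · rintro ⟨v, hv, hxX, hxu'⟩
        refine ⟨hxX, fun l hl => ?_⟩
        rw [hxu' l (by omega), Function.update_of_ne (hne l hl)]
    have hdisj : (↑(S \ (fb k i).image u) : Set α).PairwiseDisjoint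
        (fun v => (XSet k S).filter
          (fun x => ∀ l : Fin k, l.val < i + 1 → x l = Function.update u li v l)) := by
      intro v1 _ v2 _ hne12
      simp only [Function.onFun]
      apply Finset.disjoint_left.mpr
      intro x hx1 hx2
      have h1 := (Finset.mem_filter.mp hx1).2 li (by omega)
      have h2 := (Finset.mem_filter.mp hx2).2 li (by omega)
      rw [Function.update_self] at h1 h2
      exact hne12 (h1.symm.trans h2)
    rw [hpart, Finset.sum_biUnion hdisj]
    have hzcu' : ∀ v : α, zchain k a y (Function.update u li v) li.val = zchain k a y u i := by
      intro v
      rw [hlival]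
      exact zchain_congr a y i (fun l hl => by rw [Function.update_of_ne (hne l hl)])
    have hcompl : Finset.univ \ fb k i = insert li (Finset.univ \ fb k (i + 1)) :=
      fb_compl_insert hik
    have hlinotmem : li ∉ Finset.univ \ fb k (i + 1) := by
      simp only [Finset.mem_sdiff, Finset.mem_univ, true_and, not_not]
      exact mem_fb.mpr (by omega)
    by_cases hyz : y li = zchain k a y u i
    · -- Case A : the new element is taken at step i
      have hqA : ∀ v : α, qfac k a w S y (Function.update u li v) li
          = w (zchain k a y u i) / Wden k a w S y i := by
        intro v
        unfold qfac
        rw [hzcu', if_pos hyz, hlival]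
      have hstep : ∀ v ∈ S \ (fb k i).image u,
          (∑ x ∈ (XSet k S).filter
              (fun x => ∀ l : Fin k, l.val < i + 1 → x l = Function.update u li v l),
            ((∏ j : Fin k, w (x j) / (wS - ∑ l ∈ fb k j.val, w (x l))) *
              ∏ j : Fin k, qfac k a w S y x j))
          = w v * ((wS - σ)⁻¹ *
              ((w (zchain k a y u i) / Wden k a w S y i) *
               ((∏ j ∈ fb k i, (w (u j) / (wS - ∑ l ∈ fb k j.val, w (u l))) *
                  qfac k a w S y u j) *
                ∏ j ∈ Finset.univ \ fb k (i + 1), w (y j) / Wden k a w S y j.val))) := by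
        intro v hv
        rw [hIH v hv (Or.inl hyz), hqA v]
        ring
      rw [Finset.sum_congr rfl hstep, ← Finset.sum_mul, hdiff_sum]
      rw [hcompl, Finset.prod_insert hlinotmem]
      have : w (y li) = w (zchain k a y u i) := by rw [hyz]
      rw [this, hlival, ← mul_assoc, mul_inv_cancel₀ (ne_of_gt hSdiff_pos), one_mul]
      ring
    · -- Case B : y li is an old element
      have hyliS : y li ∈ S \ (fb k i).image u := by
        rw [Finset.mem_sdiff]
        constructor
        · rcases Finset.mem_insert.mp (hyT li) with h | h
          · exfalso
            have haz : a ∈ insert (zchain k a y u i) ((fb k i).image y) := by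
              rw [← hinv1]; exact Finset.mem_insert_self _ _
            rcases Finset.mem_insert.mp haz with h1 | h1
            · exact hyz (h ▸ h1)
            · rcases Finset.mem_image.mp h1 with ⟨l, hl, hEq⟩
              have : l = li := hyinj (hEq.trans h.symm)
              rw [this] at hl
              exact absurd (mem_fb.mp hl) (by simp [hlival])
          · exact h
        · intro hmem
          have : y li ∈ insert (zchain k a y u i) ((fb k i).image y) := by
            rw [← hinv1]; exact Finset.mem_insert_of_mem hmem
          rcases Finset.mem_insert.mp this with h1 | h1
          · exact hyz h1
          · rcases Finset.mem_image.mp h1 with ⟨l, hl, hEq⟩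
            have : l = li := hyinj hEq
            rw [this] at hl
            exact absurd (mem_fb.mp hl) (by simp [hlival])
      rw [Finset.sum_eq_single_of_mem (y li) hyliS ?side]
      case side =>
        intro v hv hvne
        apply Finset.sum_eq_zero
        intro x hx
        obtain ⟨hxX, hxu'⟩ := Finset.mem_filter.mp hx
        have hq0 : qfac k a w S y x li = 0 := by
          unfold qfac
          have hzcx : zchain k a y x li.val = zchain k a y u i := by
            rw [hlival]
            exact zchain_congr a y i (fun l hl => by
              rw [hxu' l (by omega), Function.update_of_ne (hne l hl)])
          rw [hzcx, if_neg hyz, if_neg ?hne2]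
          case hne2 =>
            rw [hxu' li (by omega), Function.update_self]
            exact fun h => hvne h.symm
        have : (∏ j : Fin k, qfac k a w S y x j) = 0 :=
          Finset.prod_eq_zero (Finset.mem_univ li) hq0
        rw [this, mul_zero]
      · rw [hIH (y li) hyliS (Or.inr rfl)]
        have hqB : qfac k a w S y (Function.update u li (y li)) li
            = (wS - σ) / Wden k a w S y i := by
          unfold qfac
          rw [hzcu', if_neg hyz]
          rw [if_pos (by rw [Function.update_self])]
          rw [hlival]
          have h1 : 1 - w (zchain k a y u i) / Wden k a w S y i
              = (wS - σ) / Wden k a w S y i := by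
            rw [hweight, sub_div, div_self (ne_of_gt hWipos)]
          rw [h1, max_eq_left (le_of_lt (div_pos hSdiff_pos hWipos))]
        have hsmall : w (y li) / (wS - σ) * ((wS - σ) / Wden k a w S y i)
            = w (y li) / Wden k a w S y i := by
          field_simp
        rw [hqB, hcompl, Finset.prod_insert hlinotmem, hlival, hsmall]
        ring

end
section
variable {Ω α : Type*} [DecidableEq α]

private lemma det_lemma (k : ℕ) (S : Finset α) (a : α) (ha : a ∉ S)
    (X X' : Fin k → α) (B : Fin k → Prop)
    (hY0 : ∀ (h0 : 0 < k),
      (B ⟨0, h0⟩ → X' ⟨0, h0⟩ = a) ∧ (¬ B ⟨0, h0⟩ → X' ⟨0, h0⟩ = X ⟨0, h0⟩))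
    (hYs : ∀ (i : ℕ) (hi : i + 1 < k) (Z : α),
      insert a ((Finset.univ.filter fun l : Fin k => l.val ≤ i).image X) \
        ((Finset.univ.filter fun l : Fin k => l.val ≤ i).image X') = {Z} →
      (B ⟨i + 1, hi⟩ → X' ⟨i + 1, hi⟩ = Z) ∧
        (¬ B ⟨i + 1, hi⟩ → X' ⟨i + 1, hi⟩ = X ⟨i + 1, hi⟩))
    (hinj : Function.Injective X) (hmem : ∀ j, X j ∈ S) :
    ∀ i : ℕ, i ≤ k →
      (∀ l l' : Fin k, l.val < i → l'.val < i → X' l = X' l' → l = l') ∧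
      ((fb k i).image X' ⊆ insert a ((fb k i).image X)) := by
  intro i
  induction i with
  | zero =>
    intro _
    constructor
    · intro l l' hl; omega
    · rw [fb_zero]; simp
  | succ i ihd =>
    intro hik1
    have hik : i < k := hik1
    set li : Fin k := ⟨i, hik⟩ with hli
    obtain ⟨ih1, ih2⟩ := ihd (le_of_lt hik)
    have hsplit : ∀ l : Fin k, l.val < i + 1 → l.val < i ∨ l = li := fun l hl => by
      rcases Nat.lt_succ_iff_lt_or_eq.mp hl with h | h
      · exact Or.inl h
      · exact Or.inr (Fin.ext h)
    have hXinj_img : ((fb k i).image X).card = i := by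
      rw [Finset.card_image_of_injOn (fun l _ l' _ h => hinj h), fb_card (le_of_lt hik)]
    have hcard1 : (insert a ((fb k i).image X)).card = i + 1 := by
      rw [Finset.card_insert_of_notMem (fun h => by
        rcases Finset.mem_image.mp h with ⟨l, _, hl⟩
        exact ha (hl ▸ hmem l)), hXinj_img]
    have hcard2 : ((fb k i).image X').card = i := by
      rw [Finset.card_image_of_injOn
        (fun l hl l' hl' h => ih1 l l' (mem_fb.mp hl) (mem_fb.mp hl') h),
        fb_card (le_of_lt hik)]
    have hsing : ∃ Z, insert a ((fb k i).image X) \ ((fb k i).image X') = {Z} := by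
      rw [← Finset.card_eq_one, Finset.card_sdiff_of_subset ih2, hcard1, hcard2]
      omega
    obtain ⟨Z, hZ⟩ := hsing
    have hZmem : Z ∈ insert a ((fb k i).image X) := by
      have : Z ∈ insert a ((fb k i).image X) \ ((fb k i).image X') := by
        rw [hZ]; exact Finset.mem_singleton_self Z
      exact (Finset.mem_sdiff.mp this).1
    have hZnot : Z ∉ (fb k i).image X' := by
      have : Z ∈ insert a ((fb k i).image X) \ ((fb k i).image X') := by
        rw [hZ]; exact Finset.mem_singleton_self Z
      exact (Finset.mem_sdiff.mp this).2
    have hXli_not : X li ∉ insert a ((fb k i).image X) := by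
      simp only [Finset.mem_insert, not_or]
      constructor
      · exact fun h => ha (h ▸ hmem li)
      · intro h
        rcases Finset.mem_image.mp h with ⟨l, hl, hEq⟩
        have := hinj hEq
        rw [this] at hl
        exact absurd (mem_fb.mp hl) (by simp [hli])
    have hdec : (B li → X' li = Z) ∧ (¬ B li → X' li = X li) := by
      rcases Nat.eq_zero_or_pos i with rfl | hpos
      · have hZa : Z = a := by
          have : insert a ((fb k 0).image X) \ ((fb k 0).image X') = {a} := by
            rw [fb_zero]; simp
          rw [this] at hZ
          exact (Finset.singleton_injective hZ).symm
        rw [hZa]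
        exact hY0 hik
      · obtain ⟨i', rfl⟩ : ∃ i', i = i' + 1 := ⟨i - 1, by omega⟩
        apply hYs i' hik Z
        rw [fb_le]
        exact hZ
    have hnew : X' li ∉ (fb k i).image X' := by
      by_cases hb : B li
      · rw [hdec.1 hb]; exact hZnot
      · rw [hdec.2 hb]
        intro hmem'
        exact hXli_not (ih2 hmem')
    constructor
    · intro l l' hl hl' hEq
      rcases hsplit l hl with h1 | rfl
      · rcases hsplit l' hl' with h2 | rfl
        · exact ih1 l l' h1 h2 hEq
        · exact absurd (Finset.mem_image.mpr ⟨l, mem_fb.mpr h1, hEq⟩) hnew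
      · rcases hsplit l' hl' with h2 | rfl
        · exact absurd (Finset.mem_image.mpr ⟨l', mem_fb.mpr h2, hEq.symm⟩) hnew
        · rfl
    · rw [fb_succ hik, Finset.image_insert, Finset.image_insert]
      apply Finset.insert_subset
      · by_cases hb : B li
        · rw [hdec.1 hb]
          exact Finset.insert_subset_insert _ (Finset.subset_insert _ _) hZmem
        · rw [hdec.2 hb]
          exact Finset.mem_insert_of_mem (Finset.mem_insert_self _ _)
      · intro c hc
        have := ih2 hc
        rcases Finset.mem_insert.mp this with h | h
        · exact h ▸ Finset.mem_insert_self _ _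
        · exact Finset.mem_insert_of_mem (Finset.mem_insert_of_mem h)

end

section
variable {α : Type*} [DecidableEq α]
private lemma insert_sdiff_self' {s : Finset α} {z : α} (h : z ∉ s) :
    insert z s \ s = {z} := by
  ext c
  simp only [Finset.mem_sdiff, Finset.mem_insert, Finset.mem_singleton]
  constructor
  · rintro ⟨hc | hc, hns⟩
    · exact hc
    · exact absurd hc hns
  · rintro rfl
    exact ⟨Or.inl rfl, h⟩
end
section
open MeasureTheory
variable {Ω α : Type*} [MeasurableSpace Ω] [MeasurableSpace α]
  [MeasurableSingletonClass α] [DecidableEq α]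

private theorem cascade_step (μ : Measure Ω) [IsProbabilityMeasure μ]
    (S : Finset α) (a : α) (ha : a ∉ S) (w : α → ℝ) (hw : ∀ c ∈ insert a S, 0 < w c)
    (k : ℕ) (hk : k ≤ S.card)
    (X X' : Fin k → Ω → α) (hX : ∀ j, Measurable (X j)) (hX' : ∀ j, Measurable (X' j))
    (B : Fin k → Set Ω) (hB : ∀ i, MeasurableSet (B i))
    (has : ∀ᵐ ω ∂μ, Function.Injective (fun j => X j ω) ∧ ∀ j, X j ω ∈ S)
    (hlaw : ∀ x : Fin k → α, (∀ j, x j ∈ S) → Function.Injective x →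
      μ {ω | ∀ j, X j ω = x j} = ENNReal.ofReal (∏ j : Fin k,
        w (x j) / ((∑ c ∈ S, w c) - ∑ l ∈ Finset.univ.filter (· < j), w (x l))))
    (hY0 : ∀ (h0 : 0 < k) (ω : Ω),
      (ω ∈ B ⟨0, h0⟩ → X' ⟨0, h0⟩ ω = a) ∧ (ω ∉ B ⟨0, h0⟩ → X' ⟨0, h0⟩ ω = X ⟨0, h0⟩ ω))
    (hYs : ∀ (i : ℕ) (hi : i + 1 < k) (ω : Ω) (Z : α),
      insert a ((Finset.univ.filter fun l : Fin k => l.val ≤ i).image fun l => X l ω) \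
        ((Finset.univ.filter fun l : Fin k => l.val ≤ i).image fun l => X' l ω) = {Z} →
      (ω ∈ B ⟨i + 1, hi⟩ → X' ⟨i + 1, hi⟩ ω = Z) ∧
        (ω ∉ B ⟨i + 1, hi⟩ → X' ⟨i + 1, hi⟩ ω = X ⟨i + 1, hi⟩ ω))
    (hBc : ∀ (i : Fin k) (x y : Fin k → α) (Z : α),
      insert a ((Finset.univ.filter (· < i)).image x) \
        ((Finset.univ.filter (· < i)).image y) = {Z} →
      μ (B i ∩ {ω | (∀ l, X l ω = x l) ∧ ∀ l, l < i → X' l ω = y l}) =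
        ENNReal.ofReal (w Z /
            ∑ c ∈ insert a S \ ((Finset.univ.filter (· < i)).image y), w c) *
          μ {ω | (∀ l, X l ω = x l) ∧ ∀ l, l < i → X' l ω = y l}) :
    (∀ᵐ ω ∂μ, Function.Injective (fun j => X' j ω) ∧ ∀ j, X' j ω ∈ insert a S) ∧
    (∀ y : Fin k → α, (∀ j, y j ∈ insert a S) → Function.Injective y →
      μ {ω | ∀ j, X' j ω = y j} = ENNReal.ofReal (∏ j : Fin k,
        w (y j) / ((∑ c ∈ insert a S, w c) -
          ∑ l ∈ Finset.univ.filter (· < j), w (y l)))) := by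
  classical
  constructor
  · -- almost sure distinctness and membership
    filter_upwards [has] with ω hΦ
    have hD := det_lemma k S a ha (fun j => X j ω) (fun j => X' j ω) (fun i => ω ∈ B i)
      (fun h0 => hY0 h0 ω) (fun i hi Z hZ => hYs i hi ω Z hZ) hΦ.1 hΦ.2 k le_rfl
    constructor
    · intro l l' hEq
      exact hD.1 l l' l.isLt l'.isLt hEq
    · intro j
      have : X' j ω ∈ (fb k k).image (fun l => X' l ω) :=
        Finset.mem_image_of_mem _ (by rw [fb_top]; exact Finset.mem_univ j)
      have h2 := hD.2 this
      rcases Finset.mem_insert.mp h2 with h | h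
      · exact h ▸ Finset.mem_insert_self _ _
      · rcases Finset.mem_image.mp h with ⟨l, _, hl⟩
        exact Finset.mem_insert_of_mem (hl ▸ hΦ.2 l)
  · intro y hyT hyinj
    have hyimg_sub : ∀ i : ℕ, (fb k i).image y ⊆ insert a S := by
      intro i c hc
      rcases Finset.mem_image.mp hc with ⟨l, _, hl⟩
      exact hl ▸ hyT l
    have hW : ∀ i : ℕ, (∑ c ∈ insert a S \ (fb k i).image y, w c) = Wden k a w S y i := by
      intro i
      rw [Finset.sum_sdiff_eq_sub (hyimg_sub i), Finset.sum_image (fun l _ l' _ h => hyinj h)]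
      rfl
    have hWpos : ∀ i : ℕ, i < k → 0 < Wden k a w S y i := by
      intro i hik
      rw [← hW]
      apply Finset.sum_pos (fun c hc => hw c (Finset.mem_sdiff.mp hc).1)
      rw [← Finset.card_pos, Finset.card_sdiff_of_subset (hyimg_sub i),
        Finset.card_insert_of_notMem ha,
        Finset.card_image_of_injOn (fun l _ l' _ h => hyinj h), fb_card (le_of_lt hik)]
      omega
    have hAmeas : ∀ x : Fin k → α, MeasurableSet {ω | ∀ l, X l ω = x l} := by
      intro x
      have : {ω | ∀ l, X l ω = x l} = ⋂ l, (X l) ⁻¹' {x l} := by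
        ext ω; simp [Set.mem_iInter]
      rw [this]
      exact MeasurableSet.iInter (fun l => hX l (measurableSet_singleton _))
    -- the per-sample recursion
    have L6 : ∀ x : Fin k → α, (∀ j, x j ∈ S) → Function.Injective x →
        ∀ i : ℕ, i ≤ k →
        μ {ω | (∀ l, X l ω = x l) ∧ ∀ l : Fin k, l.val < i → X' l ω = y l}
          = ENNReal.ofReal (∏ j ∈ fb k i, qfac k a w S y x j) *
            μ {ω | ∀ l, X l ω = x l} := by
      intro x hxS hxinj i
      induction i with
      | zero =>
        intro _
        have h0 : {ω | (∀ l, X l ω = x l) ∧ ∀ l : Fin k, l.val < 0 → X' l ω = y l}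
            = {ω | ∀ l, X l ω = x l} := by
          ext ω; simp
        rw [h0, fb_zero, Finset.prod_empty, ENNReal.ofReal_one, one_mul]
      | succ i ihL =>
        intro hik1
        have hik : i < k := hik1
        set li : Fin k := ⟨i, hik⟩ with hli
        have hsplit : ∀ l : Fin k, l.val < i + 1 → l.val < i ∨ l = li := fun l hl => by
          rcases Nat.lt_succ_iff_lt_or_eq.mp hl with h | h
          · exact Or.inl h
          · exact Or.inr (Fin.ext h)
        have hEv_mono : {ω | (∀ l, X l ω = x l) ∧ ∀ l : Fin k, l.val < i + 1 → X' l ω = y l}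
            ⊆ {ω | (∀ l, X l ω = x l) ∧ ∀ l : Fin k, l.val < i → X' l ω = y l} := by
          rintro ω ⟨h1, h2⟩; exact ⟨h1, fun l hl => h2 l (by omega)⟩
        have hprod_succ : (∏ j ∈ fb k (i+1), qfac k a w S y x j)
            = qfac k a w S y x li * ∏ j ∈ fb k i, qfac k a w S y x j := by
          rw [fb_succ hik, Finset.prod_insert (self_not_mem_fb hik)]
        have hIH := ihL (le_of_lt hik)
        by_cases hcomp : ∀ l : Fin k, l.val < i → y l = zchain k a y x l.val ∨ y l = x l
        case neg =>
          push_neg at hcomp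
          obtain ⟨l0, hl0, hy1, hy2⟩ := hcomp
          have hq0 : qfac k a w S y x l0 = 0 := by
            unfold qfac; rw [if_neg hy1, if_neg hy2]
          have hPz : (∏ j ∈ fb k i, qfac k a w S y x j) = 0 :=
            Finset.prod_eq_zero (mem_fb.mpr hl0) hq0
          have hPz1 : (∏ j ∈ fb k (i+1), qfac k a w S y x j) = 0 :=
            Finset.prod_eq_zero (mem_fb.mpr (by omega : l0.val < i + 1)) hq0
          rw [hPz, ENNReal.ofReal_zero, zero_mul] at hIH
          rw [hPz1, ENNReal.ofReal_zero, zero_mul]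
          exact le_antisymm (hIH ▸ measure_mono hEv_mono) (by simp)
        case pos =>
        obtain ⟨hinv1, hinv2⟩ := inv_lemma k a S ha y x i (le_of_lt hik)
          (fun l _ => hxS l) (fun l l' _ _ h => hxinj h) hcomp
        have hsing : insert a ((fb k i).image x) \ ((fb k i).image y)
            = {zchain k a y x i} := by
          rw [hinv1]; exact insert_sdiff_self' hinv2
        have hzT : zchain k a y x i ∈ insert a S := by
          rcases Finset.mem_insert.mp (zchain_mem a y x i (le_of_lt hik)) with h | h
          · rw [h]; exact Finset.mem_insert_self _ _
          · rcases Finset.mem_image.mp h with ⟨l, _, hl⟩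
            exact Finset.mem_insert_of_mem (hl ▸ hxS l)
        have hzx : zchain k a y x i ≠ x li := by
          intro hEq
          have h1 : zchain k a y x i ∈ insert a ((fb k i).image x) :=
            zchain_mem a y x i (le_of_lt hik)
          rw [hEq] at h1
          rcases Finset.mem_insert.mp h1 with h | h
          · exact ha (h ▸ hxS li)
          · rcases Finset.mem_image.mp h with ⟨l, hl, hEq2⟩
            have := hxinj hEq2
            rw [this] at hl
            exact absurd (mem_fb.mp hl) (by simp [hli])
        have hdec : ∀ ω, (∀ l, X l ω = x l) → (∀ l : Fin k, l.val < i → X' l ω = y l) →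
            (ω ∈ B li → X' li ω = zchain k a y x i) ∧
            (ω ∉ B li → X' li ω = X li ω) := by
          intro ω hXx hX'y
          rcases Nat.eq_zero_or_pos i with rfl | hpos
          · exact hY0 hik ω
          · obtain ⟨i', rfl⟩ : ∃ i', i = i' + 1 := ⟨i - 1, by omega⟩
            apply hYs i' hik ω _
            rw [fb_le]
            have h1 : (fb k (i'+1)).image (fun l => X l ω) = (fb k (i'+1)).image x :=
              Finset.image_congr (fun l _ => hXx l)
            have h2 : (fb k (i'+1)).image (fun l => X' l ω) = (fb k (i'+1)).image y :=
              Finset.image_congr (fun l hl => hX'y l (mem_fb.mp (by exact hl)))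
            rw [h1, h2]
            exact hsing
        have hBeq : μ (B li ∩ {ω | (∀ l, X l ω = x l) ∧
              ∀ l : Fin k, l.val < i → X' l ω = y l})
            = ENNReal.ofReal (w (zchain k a y x i) / Wden k a w S y i) *
              μ {ω | (∀ l, X l ω = x l) ∧ ∀ l : Fin k, l.val < i → X' l ω = y l} := by
          have hset : {ω | (∀ l, X l ω = x l) ∧ ∀ l, l < li → X' l ω = y l}
              = {ω | (∀ l, X l ω = x l) ∧ ∀ l : Fin k, l.val < i → X' l ω = y l} := by
            ext ω
            simp only [Set.mem_setOf_eq, Fin.lt_def, hli]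
          have hsing' : insert a ((Finset.univ.filter (· < li)).image x) \
              ((Finset.univ.filter (· < li)).image y) = {zchain k a y x i} := by
            rw [fb_fin]; exact hsing
          have hden : (∑ c ∈ insert a S \ ((Finset.univ.filter (· < li)).image y), w c)
              = Wden k a w S y i := by
            rw [fb_fin]; exact hW i
          have h := hBc li x y (zchain k a y x i) hsing'
          rw [hset, hden] at h
          exact h
        have hr0 : 0 ≤ w (zchain k a y x i) / Wden k a w S y i :=
          div_nonneg (le_of_lt (hw _ hzT)) (le_of_lt (hWpos i hik))
        by_cases hyz : y li = zchain k a y x i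
        · have hEset : {ω | (∀ l, X l ω = x l) ∧ ∀ l : Fin k, l.val < i + 1 → X' l ω = y l}
              = B li ∩ {ω | (∀ l, X l ω = x l) ∧ ∀ l : Fin k, l.val < i → X' l ω = y l} := by
            ext ω
            simp only [Set.mem_setOf_eq, Set.mem_inter_iff]
            constructor
            · rintro ⟨h1, h2⟩
              have h2' : ∀ l : Fin k, l.val < i → X' l ω = y l :=
                fun l hl => h2 l (by omega)
              refine ⟨?_, h1, h2'⟩
              by_contra hb
              have h4 := (hdec ω h1 h2').2 hb
              have h3 := h2 li (by simp [hli])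
              rw [h4, h1 li] at h3
              exact hzx (hyz ▸ h3).symm
            · rintro ⟨hb, h1, h2⟩
              refine ⟨h1, fun l hl => ?_⟩
              rcases hsplit l hl with h | rfl
              · exact h2 l h
              · rw [(hdec ω h1 h2).1 hb, ← hyz]
          have hqli : qfac k a w S y x li
              = w (zchain k a y x i) / Wden k a w S y i := by
            unfold qfac
            rw [if_pos hyz]
          rw [hEset, hBeq, hIH, hprod_succ, hqli, ← mul_assoc,
            ← ENNReal.ofReal_mul hr0]
        · by_cases hyx : y li = x li
          · have hEset : {ω | (∀ l, X l ω = x l) ∧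
                  ∀ l : Fin k, l.val < i + 1 → X' l ω = y l}
                = {ω | (∀ l, X l ω = x l) ∧ ∀ l : Fin k, l.val < i → X' l ω = y l}
                  \ B li := by
              ext ω
              simp only [Set.mem_setOf_eq, Set.mem_diff]
              constructor
              · rintro ⟨h1, h2⟩
                have h2' : ∀ l : Fin k, l.val < i → X' l ω = y l :=
                  fun l hl => h2 l (by omega)
                refine ⟨⟨h1, h2'⟩, ?_⟩
                intro hb
                have h4 := (hdec ω h1 h2').1 hb
                have h3 := h2 li (by simp [hli])
                rw [h4] at h3
                exact hyz h3.symm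
              · rintro ⟨⟨h1, h2⟩, hb⟩
                refine ⟨h1, fun l hl => ?_⟩
                rcases hsplit l hl with h | rfl
                · exact h2 l h
                · rw [(hdec ω h1 h2).2 hb, h1 li, ← hyx]
            have hr1 : w (zchain k a y x i) / Wden k a w S y i ≤ 1 := by
              rw [div_le_one (hWpos i hik), ← hW i]
              apply Finset.single_le_sum
                (fun c hc => le_of_lt (hw c (Finset.mem_sdiff.mp hc).1))
              rw [Finset.mem_sdiff]
              exact ⟨hzT, hinv2⟩
            have hqli : qfac k a w S y x li
                = 1 - w (zchain k a y x i) / Wden k a w S y i := by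
              unfold qfac
              rw [if_neg hyz, if_pos hyx]
              exact max_eq_left (by linarith)
            have hsub : μ ({ω | (∀ l, X l ω = x l) ∧
                  ∀ l : Fin k, l.val < i → X' l ω = y l} \ B li)
                = μ {ω | (∀ l, X l ω = x l) ∧ ∀ l : Fin k, l.val < i → X' l ω = y l}
                  - ENNReal.ofReal (w (zchain k a y x i) / Wden k a w S y i) *
                    μ {ω | (∀ l, X l ω = x l) ∧
                      ∀ l : Fin k, l.val < i → X' l ω = y l} := by
              have h5 := measure_inter_add_diff (μ := μ)
                {ω | (∀ l, X l ω = x l) ∧ ∀ l : Fin k, l.val < i → X' l ω = y l} (hB li)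
              have h6 : μ ({ω | (∀ l, X l ω = x l) ∧
                    ∀ l : Fin k, l.val < i → X' l ω = y l} \ B li)
                  = μ {ω | (∀ l, X l ω = x l) ∧ ∀ l : Fin k, l.val < i → X' l ω = y l}
                    - μ ({ω | (∀ l, X l ω = x l) ∧
                      ∀ l : Fin k, l.val < i → X' l ω = y l} ∩ B li) :=
                ENNReal.eq_sub_of_add_eq (measure_ne_top μ _) (by rw [add_comm]; exact h5)
              rw [h6, Set.inter_comm, hBeq]
            have honeminus : (0:ℝ) ≤ 1 - w (zchain k a y x i) / Wden k a w S y i := by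
              linarith
            rw [hEset, hsub, hIH, hprod_succ, hqli,
              ENNReal.ofReal_mul honeminus, ENNReal.ofReal_sub 1 hr0,
              ENNReal.ofReal_one, mul_assoc,
              ENNReal.sub_mul (fun _ _ => ENNReal.mul_ne_top ENNReal.ofReal_ne_top
                (measure_ne_top μ _)), one_mul]
          · have hq0 : qfac k a w S y x li = 0 := by
              unfold qfac
              rw [if_neg hyz, if_neg hyx]
            have hEempty : {ω | (∀ l, X l ω = x l) ∧
                ∀ l : Fin k, l.val < i + 1 → X' l ω = y l} = ∅ := by
              ext ω
              simp only [Set.mem_setOf_eq, Set.mem_empty_iff_false, iff_false, not_and]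
              intro h1 h2
              have h2' : ∀ l : Fin k, l.val < i → X' l ω = y l :=
                fun l hl => h2 l (by omega)
              have h3 := h2 li (by simp [hli])
              by_cases hb : ω ∈ B li
              · rw [(hdec ω h1 h2').1 hb] at h3
                exact hyz h3.symm
              · rw [(hdec ω h1 h2').2 hb, h1 li] at h3
                exact hyx h3.symm
            rw [hEempty, measure_empty, hprod_succ, hq0, zero_mul,
              ENNReal.ofReal_zero, zero_mul]
    have hDmeas : MeasurableSet {ω | ∀ j, X' j ω = y j} := by
      have h : {ω | ∀ j, X' j ω = y j} = ⋂ j, (X' j) ⁻¹' {y j} := by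
        ext ω; simp [Set.mem_iInter]
      rw [h]
      exact MeasurableSet.iInter (fun l => hX' l (measurableSet_singleton _))
    have hpart : μ {ω | ∀ j, X' j ω = y j}
        = ∑ x ∈ XSet k S,
            μ ({ω | ∀ j, X' j ω = y j} ∩ {ω | ∀ l, X l ω = x l}) := by
      have hae : {ω | ∀ j, X' j ω = y j}
          =ᵐ[μ] ⋃ x ∈ XSet k S,
            ({ω | ∀ j, X' j ω = y j} ∩ {ω | ∀ l, X l ω = x l}) := by
        rw [Filter.eventuallyEq_set]
        filter_upwards [has] with ω hΦ
        constructor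
        · intro hω
          apply Set.mem_biUnion (mem_XSet.mpr ⟨hΦ.2, hΦ.1⟩)
          exact ⟨hω, fun l => rfl⟩
        · intro hω
          obtain ⟨x, _, h1, _⟩ := Set.mem_iUnion₂.mp hω
          exact h1
      rw [measure_congr hae]
      apply measure_biUnion_finset
      · intro x1 _ x2 _ hne12
        simp only [Function.onFun]
        apply Set.disjoint_left.mpr
        rintro ω ⟨_, hω1⟩ ⟨_, hω2⟩
        exact hne12 (funext fun l => (hω1 l).symm.trans (hω2 l))
      · exact fun x _ => hDmeas.inter (hAmeas x)
    have hterm : ∀ x ∈ XSet k S,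
        μ ({ω | ∀ j, X' j ω = y j} ∩ {ω | ∀ l, X l ω = x l})
        = ENNReal.ofReal
            ((∏ j : Fin k, w (x j) / ((∑ c ∈ S, w c) - ∑ l ∈ fb k j.val, w (x l))) *
              ∏ j : Fin k, qfac k a w S y x j) := by
      intro x hx
      obtain ⟨hxS, hxinj⟩ := mem_XSet.mp hx
      have hEv : {ω | ∀ j, X' j ω = y j} ∩ {ω | ∀ l, X l ω = x l}
          = {ω | (∀ l, X l ω = x l) ∧ ∀ l : Fin k, l.val < k → X' l ω = y l} := by
        ext ω
        simp only [Set.mem_inter_iff, Set.mem_setOf_eq]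
        constructor
        · rintro ⟨h1, h2⟩; exact ⟨h2, fun l _ => h1 l⟩
        · rintro ⟨h1, h2⟩; exact ⟨fun l => h2 l l.isLt, h1⟩
      have hPrw : (∏ j : Fin k,
            w (x j) / ((∑ c ∈ S, w c) - ∑ l ∈ Finset.univ.filter (· < j), w (x l)))
          = ∏ j : Fin k, w (x j) / ((∑ c ∈ S, w c) - ∑ l ∈ fb k j.val, w (x l)) := by
        apply Finset.prod_congr rfl
        intro j _
        rw [fb_fin]
      have hqnn : (0:ℝ) ≤ ∏ j : Fin k, qfac k a w S y x j :=
        Finset.prod_nonneg (fun j _ => qfac_nonneg k a w S hw y x hyT hyinj hxS j)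
      rw [hEv, L6 x hxS hxinj k le_rfl, fb_top, hlaw x hxS hxinj, hPrw,
        mul_comm (ENNReal.ofReal (∏ j : Fin k, qfac k a w S y x j)),
        ← ENNReal.ofReal_mul
          (Finset.prod_nonneg (fun j _ => ?_))]
      · apply div_nonneg (le_of_lt (hw _ (Finset.mem_insert_of_mem (hxS j))))
        have hsub : (fb k j.val).image x ⊆ S := by
          intro c hc
          rcases Finset.mem_image.mp hc with ⟨l, _, hl⟩
          exact hl ▸ hxS l
        have h2 := Finset.sum_le_sum_of_subset_of_nonneg hsub
          (fun c hc _ => le_of_lt (hw c (Finset.mem_insert_of_mem hc)))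
        rw [Finset.sum_image (fun l _ l' _ h => hxinj h)] at h2
        linarith
    rw [hpart, Finset.sum_congr rfl hterm, ← ENNReal.ofReal_sum_of_nonneg ?nn]
    case nn =>
      intro x hx
      obtain ⟨hxS, hxinj⟩ := mem_XSet.mp hx
      apply mul_nonneg
      · apply Finset.prod_nonneg
        intro j _
        apply div_nonneg (le_of_lt (hw _ (Finset.mem_insert_of_mem (hxS j))))
        have hsub : (fb k j.val).image x ⊆ S := by
          intro c hc
          rcases Finset.mem_image.mp hc with ⟨l, _, hl⟩
          exact hl ▸ hxS l
        have h2 := Finset.sum_le_sum_of_subset_of_nonneg hsub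
          (fun c hc _ => le_of_lt (hw c (Finset.mem_insert_of_mem hc)))
        rw [Finset.sum_image (fun l _ l' _ h => hxinj h)] at h2
        linarith
      · exact Finset.prod_nonneg (fun j _ => qfac_nonneg k a w S hw y x hyT hyinj hxS j)
    have halg := alg k S a ha w hw hk y hyT hyinj k 0 (by omega) y
      (fun l hl => absurd hl (by omega)) (fun l l' hl => absurd hl (by omega))
      (fun l hl => absurd hl (by omega))
    rw [Finset.filter_true_of_mem (fun x _ => fun l hl => absurd hl (by omega)),
      fb_zero, Finset.prod_empty, one_mul, Finset.sdiff_empty] at halg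
    rw [halg]
    congr 1
end

/-- **correctness of Cascade Sampling over a stream.**  Let
`p 0, …, p (n-1)` be distinct elements with strictly positive weights and `k ≤ n`.
Write `S_m = {p 0, …, p (m-1)}`.  Suppose `Y k` is (distributed as) a `k`-sample without
replacement from `S_k`, and for each `k ≤ m < n` the tuple `Y (m+1)` is obtained from
`Y m` by the cascade update with the new element `a = p m` (update rules `hY0`, `hYsucc`;
coin flips `B m i` with the appropriate conditional probabilities, independent of
everything else, as in `hBcond`).  Then for every `k ≤ m ≤ n` the tuple `Y m` is a
`k`-sample without replacement from `S_m`: almost surely its coordinates are pairwise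
distinct elements of `S_m`, and every injective tuple `y` of elements of `S_m` has
probability `∏ j, w (y j) / (w (S_m) − ∑_{l < j} w (y l))`.  In particular this holds for
the single update step (`m + 1` from `m`), and for the output `Y n` after processing the
whole stream. -/
theorem statement9 {Ω α : Type*} [MeasurableSpace Ω] [MeasurableSpace α]
    [MeasurableSingletonClass α] [DecidableEq α]
    (μ : Measure Ω) [IsProbabilityMeasure μ]
    (n : ℕ) (p : Fin n → α) (hp : Function.Injective p)
    (w : α → ℝ) (hw : ∀ i, 0 < w (p i))
    (k : ℕ) (hkn : k ≤ n)
    (Y : ℕ → Fin k → Ω → α) (hYmeas : ∀ m j, Measurable (Y m j))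
    (B : ℕ → Fin k → Set Ω) (hBmeas : ∀ m i, MeasurableSet (B m i))
    -- base case: `Y k` is a `k`-sample without replacement from `S_k`
    (hbase_as : ∀ᵐ ω ∂μ, Function.Injective (fun j => Y k j ω) ∧
      ∀ j, Y k j ω ∈ Finset.image p (Finset.univ.filter fun l : Fin n => l.val < k))
    (hbase_law : ∀ y : Fin k → α,
      (∀ j, y j ∈ Finset.image p (Finset.univ.filter fun l : Fin n => l.val < k)) →
      Function.Injective y →
      μ {ω | ∀ j, Y k j ω = y j} =
        ENNReal.ofReal (∏ j : Fin k,
          w (y j) /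
            ((∑ c ∈ Finset.image p (Finset.univ.filter fun l : Fin n => l.val < k), w c)
              - ∑ l ∈ Finset.univ.filter (· < j), w (y l))))
    -- cascade update rules producing `Y (m+1)` from `Y m` with new element `p m`:
    (hY0 : ∀ (m : ℕ), k ≤ m → ∀ (hmn : m < n) (h0 : 0 < k) (ω : Ω),
      (ω ∈ B m ⟨0, h0⟩ → Y (m + 1) ⟨0, h0⟩ ω = p ⟨m, hmn⟩) ∧
        (ω ∉ B m ⟨0, h0⟩ → Y (m + 1) ⟨0, h0⟩ ω = Y m ⟨0, h0⟩ ω))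
    (hYsucc : ∀ (m : ℕ), k ≤ m → ∀ (hmn : m < n) (i : ℕ) (hi : i + 1 < k) (ω : Ω)
        (Z : α),
      insert (p ⟨m, hmn⟩)
            ((Finset.univ.filter fun l : Fin k => l.val ≤ i).image fun l => Y m l ω) \
          ((Finset.univ.filter fun l : Fin k => l.val ≤ i).image fun l =>
            Y (m + 1) l ω) = {Z} →
      (ω ∈ B m ⟨i + 1, hi⟩ → Y (m + 1) ⟨i + 1, hi⟩ ω = Z) ∧
        (ω ∉ B m ⟨i + 1, hi⟩ → Y (m + 1) ⟨i + 1, hi⟩ ω = Y m ⟨i + 1, hi⟩ ω))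
    -- the coin `B m i` lands heads with the appropriate conditional probability,
    -- independently of everything else:
    (hBcond : ∀ (m : ℕ), k ≤ m → ∀ (hmn : m < n) (i : Fin k) (x y : Fin k → α) (Z : α),
      insert (p ⟨m, hmn⟩) ((Finset.univ.filter (· < i)).image x) \
          ((Finset.univ.filter (· < i)).image y) = {Z} →
      μ (B m i ∩ {ω | (∀ l, Y m l ω = x l) ∧ ∀ l, l < i → Y (m + 1) l ω = y l}) =
        ENNReal.ofReal (w Z /
            ∑ c ∈ (insert (p ⟨m, hmn⟩)
                (Finset.image p (Finset.univ.filter fun l : Fin n => l.val < m))) \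
              ((Finset.univ.filter (· < i)).image y), w c) *
          μ {ω | (∀ l, Y m l ω = x l) ∧ ∀ l, l < i → Y (m + 1) l ω = y l}) :
    ∀ m : ℕ, k ≤ m → m ≤ n →
      (∀ᵐ ω ∂μ, Function.Injective (fun j => Y m j ω) ∧
        ∀ j, Y m j ω ∈ Finset.image p (Finset.univ.filter fun l : Fin n => l.val < m)) ∧
      (∀ y : Fin k → α,
        (∀ j, y j ∈ Finset.image p (Finset.univ.filter fun l : Fin n => l.val < m)) →
        Function.Injective y →
        μ {ω | ∀ j, Y m j ω = y j} =
          ENNReal.ofReal (∏ j : Fin k,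
            w (y j) /
              ((∑ c ∈ Finset.image p (Finset.univ.filter fun l : Fin n => l.val < m),
                  w c)
                - ∑ l ∈ Finset.univ.filter (· < j), w (y l)))) := by
  classical
  have hSETP : ∀ (m : ℕ) (hmn : m < n),
      Finset.image p (Finset.univ.filter fun l : Fin n => l.val < m + 1)
      = insert (p ⟨m, hmn⟩)
          (Finset.image p (Finset.univ.filter fun l : Fin n => l.val < m)) := by
    intro m hmn
    have h1 : (Finset.univ.filter fun l : Fin n => l.val < m + 1)
        = insert (⟨m, hmn⟩ : Fin n) (Finset.univ.filter fun l : Fin n => l.val < m) :=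
      fb_succ hmn
    rw [h1, Finset.image_insert]
  have hanotin : ∀ (m : ℕ) (hmn : m < n),
      p ⟨m, hmn⟩ ∉ Finset.image p (Finset.univ.filter fun l : Fin n => l.val < m) := by
    intro m hmn h
    rcases Finset.mem_image.mp h with ⟨l, hl, hEq⟩
    have := hp hEq
    rw [this] at hl
    have := (Finset.mem_filter.mp hl).2
    simp at this
  have hcard : ∀ m : ℕ, m ≤ n →
      (Finset.image p (Finset.univ.filter fun l : Fin n => l.val < m)).card = m := by
    intro m hmn
    rw [Finset.card_image_of_injective _ hp]
    exact fb_card hmn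
  have hwmem : ∀ (c : α), ∀ m : ℕ, ∀ (hmn : m < n),
      c ∈ insert (p ⟨m, hmn⟩)
        (Finset.image p (Finset.univ.filter fun l : Fin n => l.val < m)) → 0 < w c := by
    intro c m hmn hc
    rcases Finset.mem_insert.mp hc with h | h
    · exact h ▸ hw _
    · rcases Finset.mem_image.mp h with ⟨l, _, hl⟩
      exact hl ▸ hw l
  intro m hkm
  induction m, hkm using Nat.le_induction with
  | base => intro _; exact ⟨hbase_as, hbase_law⟩
  | succ m hkm ih =>
    intro hm1n
    have hmn : m < n := hm1n
    obtain ⟨hprev_as, hprev_law⟩ := ih (le_of_lt hmn)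
    have hstep := cascade_step μ
      (Finset.image p (Finset.univ.filter fun l : Fin n => l.val < m))
      (p ⟨m, hmn⟩) (hanotin m hmn) w (fun c hc => hwmem c m hmn hc) k
      (by rw [hcard m (le_of_lt hmn)]; exact hkm)
      (Y m) (Y (m + 1)) (hYmeas m) (hYmeas (m + 1)) (B m) (hBmeas m)
      hprev_as hprev_law (hY0 m hkm hmn)
      (fun i hi ω Z hZ => hYsucc m hkm hmn i hi ω Z hZ)
      (fun i x y Z hZ => hBcond m hkm hmn i x y Z hZ)
    constructor
    · rw [hSETP m hmn]
      exact hstep.1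
    · intro y hyT hyinj
      rw [hSETP m hmn] at hyT
      rw [hSETP m hmn]
      exact hstep.2 y hyT hyinj
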